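/- Let I = ∫_{T³} dt/w₁(0̄,t) ∈ (0,∞), γ = 6, and μ₀ = √6 · I^{-1/2}. Then for every k ∈ T³ and every z > 18, the quantity Δ_{μ₀}(k; z) = ε(k) + 6 - z - μ₀² ∫_{T³} dt/(w₁(k,t) - z) is strictly negative. -/

import Mathlib

open MeasureTheory Real Filter

noncomputable def eps (k : EuclideanSpace ℝ (Fin 3)) : ℝ := ∑ i, (1 - Real.cos (k i))

noncomputable def w1 (k p : EuclideanSpace ℝ (Fin 3)) : ℝ :=
  eps k + eps ((1 / 2 : ℝ) • (k + p)) + eps p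

def T3 : Set (EuclideanSpace ℝ (Fin 3)) := {k | ∀ i, k i ∈ Set.Ioc (-Real.pi) Real.pi}

noncomputable def pibar : EuclideanSpace ℝ (Fin 3) := WithLp.toLp 2 (fun _ => Real.pi)

local notation "V" => EuclideanSpace ℝ (Fin 3)

-- per-coordinate key inequality
lemma key1 (k t u : ℝ) (hk : k ∈ Set.Ioc (-π) π)
    (h : (0 < t ∧ t ≤ π ∧ u = π - t) ∨ (-π < t ∧ t ≤ 0 ∧ u = -π - t)) :
    (1 - cos k) + (1 - cos ((k+t)/2)) + (1 - cos t) + (1 - cos (u/2)) + (1 - cos u) ≤ 6 := by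
  have hc : 0 ≤ cos (k/2) := by
    apply Real.cos_nonneg_of_mem_Icc
    constructor <;> [linarith [hk.1, Real.pi_pos]; linarith [hk.2, Real.pi_pos]]
  have hck : cos k = 2 * cos (k/2)^2 - 1 := by
    have h := Real.cos_two_mul (k/2)
    rw [show 2*(k/2) = k by ring] at h
    linarith
  have hkt : cos ((k+t)/2) = cos (k/2) * cos (t/2) - sin (k/2) * sin (t/2) := by
    rw [show (k+t)/2 = k/2 + t/2 by ring, Real.cos_add]
  have hs1 : sin (k/2) ≤ 1 := Real.sin_le_one _
  have hs2 : -1 ≤ sin (k/2) := Real.neg_one_le_sin _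
  rcases h with ⟨ht0, htp, hu⟩ | ⟨htn, ht0, hu⟩
  · have ha : 0 ≤ cos (t/2) := by
      apply Real.cos_nonneg_of_mem_Icc
      constructor <;> [linarith [Real.pi_pos]; linarith]
    have hb : 0 ≤ sin (t/2) := by
      apply Real.sin_nonneg_of_nonneg_of_le_pi <;> linarith [Real.pi_pos]
    have hcu : cos u = - cos t := by rw [hu, Real.cos_pi_sub]
    have hcu2 : cos (u/2) = sin (t/2) := by
      rw [hu, show (π - t)/2 = π/2 - t/2 by ring, Real.cos_pi_div_two_sub]
    rw [hck, hkt, hcu, hcu2]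
    nlinarith [mul_nonneg hc ha, mul_nonneg hb (sub_nonneg.mpr hs1), sq_nonneg (cos (k/2))]
  · have ha : 0 ≤ cos (t/2) := by
      apply Real.cos_nonneg_of_mem_Icc
      constructor <;> [linarith [Real.pi_pos]; linarith [Real.pi_pos]]
    have hb : sin (t/2) ≤ 0 := by
      have := Real.sin_nonneg_of_nonneg_of_le_pi (x := -(t/2)) (by linarith) (by linarith [Real.pi_pos])
      rw [Real.sin_neg] at this; linarith
    have hcu : cos u = - cos t := by
      rw [hu, show -π - t = -(t + π) by ring, Real.cos_neg, Real.cos_add_pi]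
    have hcu2 : cos (u/2) = - sin (t/2) := by
      rw [hu, show (-π - t)/2 = -(π/2 + t/2) by ring, Real.cos_neg,
        show π/2 + t/2 = t/2 + π/2 by ring, Real.cos_add_pi_div_two]
    rw [hck, hkt, hcu, hcu2]
    nlinarith [mul_nonneg hc ha, mul_nonneg (neg_nonneg.mpr hb) (by linarith : (0:ℝ) ≤ 1 + sin (k/2)), sq_nonneg (cos (k/2))]


-- box volume transfer
lemma box_eq_preimage (S : Fin 3 → Set ℝ) :
    {x : V | ∀ i, x i ∈ S i}
      = (MeasurableEquiv.toLp 2 (Fin 3 → ℝ)).symm ⁻¹' (Set.univ.pi S) := by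
  ext x
  simp [Set.mem_pi, MeasurableEquiv.coe_toLp_symm]

lemma box_volume (S : Fin 3 → Set ℝ) (hS : ∀ i, MeasurableSet (S i)) :
    (volume : Measure V) {x : V | ∀ i, x i ∈ S i} = ∏ i, volume (S i) := by
  rw [box_eq_preimage,
    (EuclideanSpace.volume_preserving_symm_measurableEquiv_toLp (Fin 3)).measure_preimage
      (MeasurableSet.univ_pi hS).nullMeasurableSet]
  exact MeasureTheory.volume_pi_pi S

lemma box_measurable (S : Fin 3 → Set ℝ) (hS : ∀ i, MeasurableSet (S i)) :
    MeasurableSet {x : V | ∀ i, x i ∈ S i} := by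
  rw [box_eq_preimage]
  exact (MeasurableEquiv.toLp 2 (Fin 3 → ℝ)).symm.measurable (MeasurableSet.univ_pi hS)

lemma hyperplane_null (i : Fin 3) (c : ℝ) :
    (volume : Measure V) {x : V | x i = c} = 0 := by
  have : {x : V | x i = c} = {x : V | ∀ j, x j ∈ Function.update (fun _ => (Set.univ : Set ℝ)) i {c} j} := by
    ext x
    constructor
    · intro hx j
      by_cases hj : j = i
      · subst hj; simpa [Function.update] using hx
      · simp [Function.update, hj]
    · intro hx
      have := hx i
      simpa [Function.update] using this
  rw [this, box_volume]
  · refine Finset.prod_eq_zero (Finset.mem_univ i) ?_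
    simp [Function.update]
  · intro j
    by_cases hj : j = i <;> simp [Function.update, hj]

lemma T3_measurable : MeasurableSet T3 :=
  box_measurable _ (fun _ => measurableSet_Ioc)

lemma T3_volume : (volume : Measure V) T3 = (ENNReal.ofReal (2*π))^3 := by
  rw [show T3 = {x : V | ∀ i, x i ∈ Set.Ioc (-π) π} from rfl, box_volume _ (fun _ => measurableSet_Ioc)]
  simp [Real.volume_Ioc]
  rw [show π + π = 2*π by ring]
  rw [ENNReal.ofReal_mul (by norm_num)]; simp

-- pieces
def Pc : Bool → Set ℝ
  | true => Set.Ioc 0 π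
  | false => Set.Ioc (-π) 0

def Qc : Bool → Set ℝ
  | true => Set.Ico 0 π
  | false => Set.Ico (-π) 0

def PP (σ : Fin 3 → Bool) : Set V := {t : V | ∀ i, t i ∈ Pc (σ i)}
def QQ (σ : Fin 3 → Bool) : Set V := {t : V | ∀ i, t i ∈ Qc (σ i)}
noncomputable def vv (σ : Fin 3 → Bool) : V := WithLp.toLp 2 (fun i => if σ i then π else -π)

lemma Pc_measurable (b : Bool) : MeasurableSet (Pc b) := by cases b <;> exact measurableSet_Ioc
lemma Qc_measurable (b : Bool) : MeasurableSet (Qc b) := by cases b <;> exact measurableSet_Ico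

lemma PP_measurable (σ) : MeasurableSet (PP σ) := box_measurable _ (fun i => Pc_measurable (σ i))
lemma QQ_measurable (σ) : MeasurableSet (QQ σ) := box_measurable _ (fun i => Qc_measurable (σ i))

lemma Pc_subset (b : Bool) : Pc b ⊆ Set.Ioc (-π) π := by
  cases b <;> intro x hx <;> simp [Pc] at hx <;>
    exact ⟨by linarith [hx.1, hx.2, Real.pi_pos], by linarith [hx.1, hx.2, Real.pi_pos]⟩

lemma Pc_mem (x : ℝ) (hx : x ∈ Set.Ioc (-π) π) : x ∈ Pc (decide (0 < x)) := by
  by_cases h : 0 < x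
  · simp [h, Pc]; exact hx.2
  · simp [h, Pc]; exact ⟨hx.1, le_of_not_gt h⟩

lemma PP_union : (⋃ σ : Fin 3 → Bool, PP σ) = T3 := by
  ext t
  simp only [Set.mem_iUnion, PP, Set.mem_setOf_eq, T3]
  constructor
  · rintro ⟨σ, hσ⟩ i
    exact Pc_subset (σ i) (hσ i)
  · intro ht
    exact ⟨fun i => decide (0 < t i), fun i => Pc_mem _ (ht i)⟩

lemma Pc_disj : ∀ x : ℝ, x ∈ Pc true → x ∈ Pc false → False := by
  intro x h1 h2; simp [Pc] at h1 h2; linarith [h1.1, h2.2]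

lemma Qc_disj : ∀ x : ℝ, x ∈ Qc true → x ∈ Qc false → False := by
  intro x h1 h2; simp [Qc] at h1 h2; linarith [h1.1, h2.2]

lemma PP_disjoint : Pairwise (Function.onFun Disjoint PP) := by
  intro σ σ' hne
  obtain ⟨i, hi⟩ := Function.ne_iff.mp hne
  refine Set.disjoint_left.mpr fun t ht ht' => ?_
  have h1 := ht i; have h2 := ht' i
  cases hσ : σ i <;> cases hσ' : σ' i <;> rw [hσ] at h1 <;> rw [hσ'] at h2
  · exact hi (by rw [hσ, hσ'])
  · exact Pc_disj _ h2 h1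
  · exact Pc_disj _ h1 h2
  · exact hi (by rw [hσ, hσ'])

lemma QQ_disjoint : Pairwise (Function.onFun Disjoint QQ) := by
  intro σ σ' hne
  obtain ⟨i, hi⟩ := Function.ne_iff.mp hne
  refine Set.disjoint_left.mpr fun t ht ht' => ?_
  have h1 := ht i; have h2 := ht' i
  cases hσ : σ i <;> cases hσ' : σ' i <;> rw [hσ] at h1 <;> rw [hσ'] at h2
  · exact hi (by rw [hσ, hσ'])
  · exact Qc_disj _ h2 h1
  · exact Qc_disj _ h1 h2
  · exact hi (by rw [hσ, hσ'])

lemma Pc_iff (b : Bool) (x : ℝ) : ((if b then π else -π) - x) ∈ Pc b ↔ x ∈ Qc b := by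
  cases b <;> simp [Pc, Qc, Set.mem_Ioc, Set.mem_Ico] <;>
    (constructor <;> (rintro ⟨h1, h2⟩; exact ⟨by linarith, by linarith⟩))

lemma image_PP (σ) : (fun t : V => vv σ - t) '' PP σ = QQ σ := by
  have hinv : Function.Involutive (fun t : V => vv σ - t) := fun t => sub_sub_cancel _ _
  rw [Set.image_eq_preimage_of_inverse hinv hinv]
  ext t
  simp only [Set.mem_preimage, PP, QQ, Set.mem_setOf_eq]
  refine forall_congr' fun i => ?_
  rw [show (vv σ - t) i = (if σ i then π else -π) - t i from rfl]
  exact Pc_iff (σ i) (t i)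

lemma smul_add_apply (k p : V) (i : Fin 3) : ((1 / 2 : ℝ) • (k + p)) i = (k i + p i)/2 := by
  rw [show ((1 / 2 : ℝ) • (k + p)) i = (1/2 : ℝ) * (k i + p i) from rfl]
  ring

lemma one_sub_cos_nonneg (x : ℝ) : 0 ≤ 1 - cos x := by linarith [Real.cos_le_one x]
lemma one_sub_cos_le_two (x : ℝ) : 1 - cos x ≤ 2 := by linarith [Real.neg_one_le_cos x]

lemma eps_nonneg (k : V) : 0 ≤ eps k :=
  Finset.sum_nonneg fun i _ => one_sub_cos_nonneg _

lemma eps_le_six (k : V) : eps k ≤ 6 := by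
  have : eps k ≤ ∑ _i : Fin 3, (2:ℝ) :=
    Finset.sum_le_sum fun i _ => one_sub_cos_le_two _
  simp at this
  linarith

lemma w1_nonneg (k p : V) : 0 ≤ w1 k p := by
  have := eps_nonneg k; have := eps_nonneg ((1 / 2 : ℝ) • (k + p)); have := eps_nonneg p
  unfold w1; linarith

lemma w1_le_18 (k p : V) : w1 k p ≤ 18 := by
  have := eps_le_six k; have := eps_le_six ((1 / 2 : ℝ) • (k + p)); have := eps_le_six p
  unfold w1; linarith

lemma w1_zero_expand (s : V) :
    w1 0 s = ∑ i, ((1 - cos (s i / 2)) + (1 - cos (s i))) := by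
  unfold w1 eps
  rw [← Finset.sum_add_distrib]
  have h0 : ∀ i, (0 : V) i = 0 := fun _ => rfl
  have h2 : ∀ i, ((1 / 2 : ℝ) • ((0:V) + s)) i = s i / 2 := fun i => by
    rw [smul_add_apply, h0]; ring
  simp only [h0, h2, Real.cos_zero, sub_self, Finset.sum_const_zero, zero_add]
  rw [← Finset.sum_add_distrib]
  refine Finset.sum_congr rfl fun i _ => ?_
  rw [show ((1/2:ℝ) • s) i = (1/2) * s i from rfl, show (1/2 : ℝ) * s i = s i / 2 by ring]

lemma key3 (σ : Fin 3 → Bool) (k : V) (hk : k ∈ T3) (t : V) (ht : t ∈ PP σ) :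
    w1 k t + w1 0 (vv σ - t) ≤ 18 := by
  have expand : w1 k t + w1 0 (vv σ - t) = ∑ i,
      ((1 - cos (k i)) + (1 - cos ((k i + t i)/2)) + (1 - cos (t i))
        + (1 - cos ((vv σ - t) i / 2)) + (1 - cos ((vv σ - t) i))) := by
    rw [w1_zero_expand]
    unfold w1 eps
    rw [← Finset.sum_add_distrib, ← Finset.sum_add_distrib, ← Finset.sum_add_distrib]
    refine Finset.sum_congr rfl fun i _ => ?_
    rw [smul_add_apply]
    ring
  rw [expand]
  have : ∀ i : Fin 3, (1 - cos (k i)) + (1 - cos ((k i + t i)/2)) + (1 - cos (t i))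
        + (1 - cos ((vv σ - t) i / 2)) + (1 - cos ((vv σ - t) i)) ≤ 6 := by
    intro i
    have hvv : (vv σ - t) i = (if σ i then π else -π) - t i := rfl
    have hti := ht i
    refine key1 (k i) (t i) ((vv σ - t) i) (hk i) ?_
    cases hσ : σ i <;> rw [hσ] at hti <;> simp [Pc] at hti <;> rw [hvv, hσ]
    · right; exact ⟨hti.1, hti.2, by simp⟩
    · left; exact ⟨hti.1, hti.2, by simp⟩
  calc ∑ i, ((1 - cos (k i)) + (1 - cos ((k i + t i)/2)) + (1 - cos (t i))
        + (1 - cos ((vv σ - t) i / 2)) + (1 - cos ((vv σ - t) i)))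
      ≤ ∑ _i : Fin 3, (6:ℝ) := Finset.sum_le_sum fun i _ => this i
    _ = 18 := by norm_num

lemma w1_zero_pos (s : V) (hs : ∀ i, |s i| ≤ π) (hne : s ≠ 0) : 0 < w1 0 s := by
  obtain ⟨j, hj⟩ : ∃ j, s j ≠ 0 := by
    by_contra h
    push_neg at h
    exact hne (by ext i; simpa using h i)
  rw [w1_zero_expand]
  have hterm : ∀ i : Fin 3, (0:ℝ) ≤ (1 - cos (s i / 2)) + (1 - cos (s i)) := fun i => by
    linarith [one_sub_cos_nonneg (s i / 2), one_sub_cos_nonneg (s i)]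
  have hj2 : (0:ℝ) < (1 - cos (s j / 2)) + (1 - cos (s j)) := by
    have h1 : cos (s j / 2) < 1 := by
      rcases lt_or_eq_of_le (Real.cos_le_one (s j / 2)) with h | h
      · exact h
      · exfalso
        have := (Real.cos_eq_one_iff_of_lt_of_lt (x := s j / 2) (by
            have := hs j; have := Real.pi_pos; cases abs_le.mp (hs j); linarith) (by
            have := Real.pi_pos; cases abs_le.mp (hs j); linarith)).mp h
        exact hj (by linarith)
    linarith [one_sub_cos_nonneg (s j)]
  calc (0:ℝ) < (1 - cos (s j / 2)) + (1 - cos (s j)) := hj2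
    _ ≤ ∑ i, ((1 - cos (s i / 2)) + (1 - cos (s i))) :=
        Finset.single_le_sum (fun i _ => hterm i) (Finset.mem_univ j)

lemma w1_measurable (k : V) : Measurable fun t : V => w1 k t := by
  unfold w1 eps
  fun_prop

lemma T3_volume_ne_top : (volume : Measure V) T3 ≠ ⊤ := by
  rw [T3_volume]
  exact ENNReal.pow_ne_top ENNReal.ofReal_ne_top

lemma g_integrableOn (k : V) (z : ℝ) (hz : 18 < z) :
    IntegrableOn (fun t : V => (z - w1 k t)⁻¹) T3 volume := by
  have hmeas : Measurable fun t : V => (z - w1 k t)⁻¹ :=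
    ((measurable_const.sub (w1_measurable k)).inv)
  refine Integrable.mono' (g := fun _ : V => (z - 18)⁻¹) ?_ hmeas.aestronglyMeasurable ?_
  · exact integrableOn_const T3_volume_ne_top
  · refine ae_of_all _ fun t => ?_
    have h1 : z - w1 k t ≥ z - 18 := by linarith [w1_le_18 k t]
    have h2 : (0:ℝ) < z - 18 := by linarith
    have h3 : (0:ℝ) < z - w1 k t := lt_of_lt_of_le h2 h1
    rw [Real.norm_eq_abs, abs_of_nonneg (le_of_lt (inv_pos.mpr h3))]
    exact inv_anti₀ h2 h1

lemma QQ_diff_null (σ : Fin 3 → Bool) : (volume : Measure V) (QQ σ \ T3) = 0 := by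
  refine measure_mono_null (fun x hx => ?_)
    (measure_iUnion_null (s := fun i => {x : V | x i = -π}) fun i => hyperplane_null i (-π))
  obtain ⟨hQ, hT⟩ := hx
  simp only [T3, Set.mem_setOf_eq] at hT
  push_neg at hT
  obtain ⟨i, hi⟩ := hT
  refine Set.mem_iUnion.mpr ⟨i, ?_⟩
  have h2 : -π ≤ x i ∧ x i < π := by
    have h1 := hQ i
    cases hσ : σ i <;> rw [hσ] at h1 <;> simp [Qc] at h1 <;>
      exact ⟨by linarith [h1.1, Real.pi_pos], by linarith [h1.2, Real.pi_pos]⟩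
  rw [Set.mem_Ioc] at hi
  push_neg at hi
  have : x i ≤ -π := by
    by_contra hcon
    push_neg at hcon
    linarith [hi hcon, h2.2]
  show x i = -π
  linarith [h2.1]

lemma f_integrableOn_QQ (σ : Fin 3 → Bool)
    (hInt : IntegrableOn (fun t : V => (w1 0 t)⁻¹) T3 volume) :
    IntegrableOn (fun t : V => (w1 0 t)⁻¹) (QQ σ) volume := by
  have h1 : IntegrableOn (fun t : V => (w1 0 t)⁻¹) (QQ σ ∩ T3) volume :=
    hInt.mono_set Set.inter_subset_right
  refine h1.congr_set_ae ?_
  rw [MeasureTheory.ae_eq_set]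
  constructor
  · refine measure_mono_null (fun x hx => ?_) (QQ_diff_null σ)
    exact ⟨hx.1, fun h => hx.2 ⟨hx.1, h⟩⟩
  · simp [Set.diff_eq_empty.mpr Set.inter_subset_left]

lemma QQ_union_ae : (⋃ σ : Fin 3 → Bool, QQ σ) =ᵐ[(volume : Measure V)] T3 := by
  rw [MeasureTheory.ae_eq_set]
  constructor
  · refine measure_mono_null (fun x hx => ?_)
      (measure_iUnion_null (s := fun σ => QQ σ \ T3) fun σ => QQ_diff_null σ)
    obtain ⟨hU, hT⟩ := hx
    obtain ⟨σ, hσ⟩ := Set.mem_iUnion.mp hU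
    exact Set.mem_iUnion.mpr ⟨σ, ⟨hσ, hT⟩⟩
  · refine measure_mono_null (fun x hx => ?_)
      (measure_iUnion_null (s := fun i => {x : V | x i = π}) fun i => hyperplane_null i π)
    obtain ⟨hT, hU⟩ := hx
    have hU' : ∃ i, x i ∉ Qc (decide (0 ≤ x i)) := by
      by_contra hcon
      push_neg at hcon
      exact hU (Set.mem_iUnion.mpr ⟨fun i => decide (0 ≤ x i), hcon⟩)
    obtain ⟨i, hi⟩ := hU'
    refine Set.mem_iUnion.mpr ⟨i, ?_⟩
    have hx1 := (hT i).1; have hx2 := (hT i).2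
    show x i = π
    by_cases h0 : 0 ≤ x i
    · rw [show decide (0 ≤ x i) = true from decide_eq_true h0] at hi
      rw [show Qc true = Set.Ico 0 π from rfl, Set.mem_Ico] at hi
      push_neg at hi
      linarith [hi h0]
    · exfalso
      rw [show decide (0 ≤ x i) = false from decide_eq_false h0] at hi
      rw [show Qc false = Set.Ico (-π) 0 from rfl, Set.mem_Ico] at hi
      push_neg at hi
      push_neg at h0
      linarith [hi (le_of_lt hx1)]

lemma vv_abs_le (σ : Fin 3 → Bool) (t : V) (ht : t ∈ PP σ) (i : Fin 3) : |(vv σ - t) i| ≤ π := by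
  have h1 := ht i
  rw [show (vv σ - t) i = (if σ i then π else -π) - t i from rfl]
  cases hσ : σ i <;> rw [hσ] at h1 <;> simp [Pc] at h1 <;> rw [abs_le] <;> simp <;>
    constructor <;> linarith [h1.1, h1.2, Real.pi_pos]

lemma J_le_I0 (k : V) (hk : k ∈ T3) (z : ℝ) (hz : 18 < z)
    (hInt : IntegrableOn (fun t : V => (w1 0 t)⁻¹) T3 volume) :
    ∫ t in T3, (z - w1 k t)⁻¹ ≤ ∫ t in T3, (w1 0 t)⁻¹ := by
  set f : V → ℝ := fun t => (w1 0 t)⁻¹ with hf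
  set g : V → ℝ := fun t => (z - w1 k t)⁻¹ with hg
  have hgT3 : IntegrableOn g T3 volume := g_integrableOn k z hz
  -- change of variables on each piece
  have himg : ∀ σ, ∫ t in QQ σ, f t = ∫ t in PP σ, f (vv σ - t) := by
    intro σ
    rw [← image_PP σ]
    exact (Measure.measurePreserving_sub_left volume (vv σ)).setIntegral_image_emb
      (MeasurableEquiv.subLeft (vv σ)).measurableEmbedding f (PP σ)
  have hf_comp : ∀ σ, IntegrableOn (fun t => f (vv σ - t)) (PP σ) volume := by
    intro σ
    have := ((Measure.measurePreserving_sub_left volume (vv σ)).integrableOn_image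
      (MeasurableEquiv.subLeft (vv σ)).measurableEmbedding (f := f) (s := PP σ)).mp
    rw [image_PP σ] at this
    exact this (f_integrableOn_QQ σ hInt)
  -- pointwise comparison on each piece
  have hstep : ∀ σ, ∫ t in PP σ, g t ≤ ∫ t in QQ σ, f t := by
    intro σ
    rw [himg σ]
    refine setIntegral_mono_on_ae (hgT3.mono_set ?_) (hf_comp σ) (PP_measurable σ) ?_
    · rw [← PP_union]; exact Set.subset_iUnion _ σ
    · have hvnull : (volume : Measure V) {vv σ} = 0 :=
        measure_mono_null (fun x hx => by simp at hx; simp [hx]) (hyperplane_null 0 (vv σ 0))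
      have hae : ∀ᵐ t : V ∂volume, t ≠ vv σ := by
        rw [MeasureTheory.ae_iff]
        simpa using hvnull
      filter_upwards [hae] with t hne hmem
      have h18 := key3 σ k hk t hmem
      have hpos : 0 < w1 0 (vv σ - t) := by
        refine w1_zero_pos _ (vv_abs_le σ t hmem) (sub_ne_zero.mpr ?_)
        exact fun h => hne (h.symm)
      have hle : w1 0 (vv σ - t) ≤ z - w1 k t := by linarith
      exact inv_anti₀ hpos hle
  -- sum over pieces
  have hsplit : ∫ t in T3, g t = ∑ σ : Fin 3 → Bool, ∫ t in PP σ, g t := by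
    rw [← PP_union, MeasureTheory.integral_iUnion PP_measurable PP_disjoint
      (by rw [PP_union]; exact hgT3), tsum_fintype]
  have hsplit2 : ∫ t in T3, f t = ∑ σ : Fin 3 → Bool, ∫ t in QQ σ, f t := by
    rw [← setIntegral_congr_set QQ_union_ae,
      MeasureTheory.integral_iUnion QQ_measurable QQ_disjoint
        (integrableOn_finite_iUnion.mpr fun σ => f_integrableOn_QQ σ hInt), tsum_fintype]
  rw [hsplit, hsplit2]
  exact Finset.sum_le_sum fun σ _ => hstep σ

noncomputable def I0 : ℝ := ∫ t in T3, (w1 (0 : EuclideanSpace ℝ (Fin 3)) t)⁻¹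

noncomputable def mu0 : ℝ := Real.sqrt 6 / Real.sqrt I0

theorem stmt17 :
    ∀ k ∈ T3, ∀ z : ℝ, 18 < z →
      eps k + 6 - z - mu0 ^ 2 * (∫ t in T3, (w1 k t - z)⁻¹) < 0 := by
  intro k hk z hz
  have hepsk := eps_le_six k
  have hflip : (∫ t in T3, (w1 k t - z)⁻¹) = -∫ t in T3, (z - w1 k t)⁻¹ := by
    rw [← MeasureTheory.integral_neg]
    refine MeasureTheory.integral_congr_ae (Filter.EventuallyEq.of_eq (funext fun t => ?_))
    rw [show w1 k t - z = -(z - w1 k t) by ring, inv_neg]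
  rcases le_or_gt I0 0 with hI | hI
  · have h0 : Real.sqrt I0 = 0 := Real.sqrt_eq_zero'.mpr hI
    have hmu : mu0 = 0 := by rw [mu0, h0, div_zero]
    rw [hmu]
    norm_num
    linarith
  · have hInt : IntegrableOn (fun t : V => (w1 0 t)⁻¹) T3 volume := by
      by_contra h
      rw [show I0 = ∫ t in T3, (w1 (0:V) t)⁻¹ from rfl, MeasureTheory.integral_undef h] at hI
      exact lt_irrefl 0 hI
    have hJ := J_le_I0 k hk z hz hInt
    have hI0eq : (∫ t in T3, (w1 (0:V) t)⁻¹) = I0 := rfl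
    rw [hI0eq] at hJ
    have hmu : mu0 ^ 2 = 6 / I0 := by
      rw [mu0, div_pow, Real.sq_sqrt (by norm_num : (0:ℝ) ≤ 6), Real.sq_sqrt (le_of_lt hI)]
    have hmul : mu0 ^ 2 * (∫ t in T3, (z - w1 k t)⁻¹) ≤ 6 := by
      have h1 : mu0 ^ 2 * (∫ t in T3, (z - w1 k t)⁻¹) ≤ mu0 ^ 2 * I0 :=
        mul_le_mul_of_nonneg_left hJ (sq_nonneg _)
      have h2 : mu0 ^ 2 * I0 = 6 := by
        rw [hmu]
        field_simp
      linarith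
    rw [hflip]
    linarith
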